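/- Let $2 \leq n \leq m$ with $n$ dividing $m$, and let $P_k$ denote the vertex set of a regular $k$-gon inscribed in the unit circle with the geodesic metric. Then the Gromov–Hausdorff distance satisfies $d_{GH}(P_n, P_m) = \frac{\pi}{n} - \frac{\pi}{m}$. -/

import Mathlib

open Real

/-- Vertex set of the regular `n`-gon inscribed in the unit circle, modeled inside
`AddCircle (2π)` whose quotient metric is exactly the geodesic metric
`d(α,β) = min (|α-β|) (2π - |α-β|)`. -/
noncomputable def Pvert (n : ℕ) : Set (AddCircle (2 * π)) :=
  Set.range fun j : Fin n => ((2 * π * j / n : ℝ) : AddCircle (2 * π))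

instance (n : ℕ) : Finite (Pvert n) := by unfold Pvert; exact (Set.finite_range _).to_subtype


instance (n : ℕ) [NeZero n] : Nonempty (Pvert n) := by
  unfold Pvert; exact ⟨⟨_, Set.mem_range_self (0 : Fin n)⟩⟩

noncomputable abbrev AC := AddCircle (2 * π)

noncomputable def vtx (n k : ℕ) : AC := ((2 * π * k / n : ℝ) : AC)

open Metric in
lemma coe_eqAC {a b : ℝ} (z : ℤ) (h : a - b = 2*π*z) : (a : AC) = (b : AC) := by
  rw [QuotientAddGroup.eq_iff_sub_mem]
  refine ⟨z, ?_⟩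
  show z • (2*π) = a - b
  rw [zsmul_eq_mul]; linarith

lemma vtx_mem {n k : ℕ} (h : k < n) : vtx n k ∈ Pvert n := ⟨⟨k, h⟩, by norm_num [vtx]⟩

lemma mem_Pvert {n : ℕ} {x : AC} (hx : x ∈ Pvert n) : ∃ k < n, x = vtx n k := by
  obtain ⟨j, rfl⟩ := hx
  exact ⟨j, j.2, by norm_num [vtx]⟩

lemma vtx_mod (n : ℕ) (hn : 0 < n) (k : ℕ) : vtx n k = vtx n (k % n) := by
  apply coe_eqAC (k / n : ℕ)
  have hn' : (n:ℝ) ≠ 0 := Nat.cast_ne_zero.2 hn.ne'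
  have h2 : ((k % n : ℕ):ℝ) + (n:ℝ) * ((k / n : ℕ):ℝ) = (k:ℝ) := by
    exact_mod_cast Nat.mod_add_div k n
  have e : (k:ℝ) - ((k % n : ℕ):ℝ) = ((k / n : ℕ):ℝ) * n := by linarith
  calc 2*π*k/n - 2*π*((k % n : ℕ):ℝ)/n = 2*π*((k:ℝ) - ((k % n : ℕ):ℝ))/n := by ring
    _ = 2*π*(((k / n : ℕ):ℝ)*n)/n := by rw [e]
    _ = 2*π*(((k / n : ℕ):ℤ):ℝ) := by rw [Int.cast_natCast]; field_simp

lemma dist_coeAC (a b : ℝ) : dist (a:AC) (b:AC) = ‖((a-b:ℝ):AC)‖ := by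
  rw [dist_eq_norm, ← QuotientAddGroup.mk_sub]

lemma normA {a : ℝ} (ha : |a| ≤ π) : ‖(a : AC)‖ = |a| := by
  rw [AddCircle.norm_coe_eq_abs_iff _ (by positivity)]
  rw [abs_of_pos (by positivity : (0:ℝ) < 2*π)]; linarith

lemma dist_vtx_adj {m : ℕ} (hm : 2 ≤ m) (k : ℕ) : dist (vtx m k) (vtx m (k+1)) = 2*π/m := by
  unfold vtx
  rw [dist_coeAC]
  have h1 : 2*π*k/m - 2*π*(k+1:ℕ)/m = -(2*π/m) := by
    have : ((m:ℝ)) ≠ 0 := by positivity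
    push_cast; field_simp; ring
  rw [h1, normA, abs_neg, abs_of_pos (by positivity)]
  rw [abs_neg, abs_of_pos (by positivity)]
  rw [div_le_iff₀ (by positivity)]
  have h2 : (2:ℝ) ≤ m := by exact_mod_cast hm
  nlinarith [pi_pos]

lemma normB (t : ℤ) (n : ℕ) (hn : 0 < n) (h : ¬ ((n:ℤ) ∣ t)) :
    2*π/n ≤ ‖((2*π*t/n : ℝ) : AC)‖ := by
  rw [AddCircle.norm_eq]
  have hπ : π ≠ 0 := pi_ne_zero
  have hn' : (n:ℝ) ≠ 0 := Nat.cast_ne_zero.2 hn.ne'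
  have : (2*π)⁻¹ * (2*π*t/n) = (t:ℝ)/n := by field_simp
  rw [this]
  set r := round ((t:ℝ)/n) with hr
  have key : 2*π*t/n - r * (2*π) = (2*π/n) * ((t:ℝ) - r*n) := by field_simp
  rw [key, abs_mul, abs_of_pos (by positivity : (0:ℝ) < 2*π/n)]
  have ht : t - r * n ≠ 0 := by
    intro hc
    exact h ⟨r, by linarith [sub_eq_zero.1 hc]⟩
  have : (1:ℝ) ≤ |(t:ℝ) - r*n| := by
    have : ((t - r*n : ℤ) : ℝ) = (t:ℝ) - r*n := by push_cast; ring
    rw [← this, ← Int.cast_abs]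
    exact_mod_cast Int.one_le_abs ht
  nlinarith [mul_le_mul_of_nonneg_left this (le_of_lt (by positivity : (0:ℝ) < 2*π/n))]


set_option maxHeartbeats 400000 in
lemma dist_vtx_ne {n : ℕ} (hn : 0 < n) {x y : AC} (hx : x ∈ Pvert n) (hy : y ∈ Pvert n)
    (hxy : x ≠ y) : 2*π/n ≤ dist x y := by
  obtain ⟨k, hk, rfl⟩ := mem_Pvert hx
  obtain ⟨j, hj, rfl⟩ := mem_Pvert hy
  have hkj : k ≠ j := fun h => hxy (by rw [h])
  unfold vtx
  rw [dist_coeAC]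
  have h1 : 2*π*k/n - 2*π*j/n = 2*π*((((k:ℤ)-(j:ℤ)) : ℤ):ℝ)/n := by push_cast; ring
  rw [h1]
  refine normB ((k:ℤ)-(j:ℤ)) n hn ?_
  intro hd
  have h0 := Int.eq_zero_of_dvd_of_natAbs_lt_natAbs hd (by omega)
  omega

set_option maxHeartbeats 1000000 in
open GromovHausdorff in
lemma ub (n m : ℕ) (hn : 2 ≤ n) (hnm : n ≤ m) (hdvd : n ∣ m) :
    haveI : NeZero n := ⟨Nat.ne_of_gt (by omega)⟩
    haveI : NeZero m := ⟨Nat.ne_of_gt (by omega)⟩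
    GromovHausdorff.ghDist (Pvert n) (Pvert m) ≤ π / n - π / m := by
  haveI : NeZero n := ⟨by omega⟩
  haveI : NeZero m := ⟨by omega⟩
  obtain ⟨q, hq⟩ := hdvd
  have hq1 : 1 ≤ q := by nlinarith
  have hn0 : 0 < n := by omega
  have hm0 : 0 < m := by omega
  have hnR : (0:ℝ) < n := by exact_mod_cast hn0
  have hmR : (0:ℝ) < m := by exact_mod_cast hm0
  have hmnq : (m:ℝ) = n * q := by exact_mod_cast hq
  set δ : ℝ := π / n - π / m with hδ
  have hδ0 : 0 ≤ δ := by
    rw [hδ, sub_nonneg, div_le_div_iff₀ hmR hnR]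
    have : (n:ℝ) ≤ m := by exact_mod_cast hnm
    nlinarith [pi_pos]
  have hδπ : δ ≤ π := by
    rw [hδ]
    have h1 : 0 < π / m := by positivity
    have h2 : π / n ≤ π := by
      rw [div_le_iff₀ hnR]
      have hn2 : (2:ℝ) ≤ n := by exact_mod_cast hn
      nlinarith [pi_pos]
    linarith
  have hδeq : δ = (q - 1 : ℝ) * π / m := by
    rw [hδ, hmnq]
    field_simp
  set Φ : Pvert n → AC := fun x => x.1 + (δ : AC) with hΦ
  set Ψ : Pvert m → AC := fun y => y.1 with hΨ
  have hΦi : Isometry Φ := Isometry.of_dist_eq fun x y => by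
    simp only [hΦ, dist_add_right, Subtype.dist_eq]
  have hΨi : Isometry Ψ := Isometry.of_dist_eq fun x y => by
    simp only [hΨ, Subtype.dist_eq]
  refine le_trans (ghDist_le_hausdorffDist hΦi hΨi) ?_
  apply Metric.hausdorffDist_le_of_mem_dist hδ0
  · rintro z ⟨x, rfl⟩
    obtain ⟨k, hk, hxv⟩ := mem_Pvert x.2
    refine ⟨vtx m (k * q), ⟨⟨vtx m (k*q), vtx_mem (by nlinarith)⟩, rfl⟩, ?_⟩
    have hvv : vtx m (k * q) = vtx n k := by
      unfold vtx
      congr 1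
      rw [hmnq]
      push_cast
      field_simp
    rw [hvv, hΦ]
    simp only
    rw [hxv, dist_eq_norm, add_sub_cancel_left, normA (by rw [abs_of_nonneg hδ0]; exact hδπ),
      abs_of_nonneg hδ0]
  · rintro w ⟨y, rfl⟩
    obtain ⟨k, hk, hyv⟩ := mem_Pvert y.2
    have hjn : k / q < n := by
      apply Nat.div_lt_of_lt_mul
      nlinarith
    refine ⟨Φ ⟨vtx n (k / q), vtx_mem hjn⟩, ⟨_, rfl⟩, ?_⟩
    have hr : k % q < q := Nat.mod_lt _ (by omega)
    have hkdm : k = q * (k / q) + k % q := (Nat.div_add_mod k q).symm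
    rw [hΦ, hΨ]
    simp only
    rw [hyv]
    unfold vtx
    have hsum : ((2 * π * (k/q : ℕ) / n : ℝ) : AC) + ((δ : ℝ) : AC)
        = ((2 * π * (k/q : ℕ) / n + δ : ℝ) : AC) := (AddCircle.coe_add _ _ _)
    rw [hsum, dist_coeAC]
    set a : ℝ := 2 * π * k / m - (2 * π * (k/q : ℕ) / n + δ)
    have ha : a = (2 * (k % q : ℕ) - (q - 1) : ℝ) * π / m := by
      have hc : (k:ℝ) = q * ((k/q : ℕ):ℝ) + ((k % q : ℕ):ℝ) := by exact_mod_cast hkdm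
      simp only [a, hδeq, hmnq, hc]
      have hqR : (0:ℝ) < q := by exact_mod_cast hq1
      field_simp
      ring
    clear_value a
    have habs : |a| ≤ δ := by
      rw [ha, hδeq]
      rw [abs_div, abs_of_pos hmR, div_le_div_iff_of_pos_right hmR, abs_mul, abs_of_pos pi_pos]
      have h1 : |(2 * (k % q : ℕ) - (q - 1) : ℝ)| ≤ (q - 1 : ℝ) := by
        rw [abs_le]
        have : ((k % q : ℕ):ℝ) ≤ (q:ℝ) - 1 := by
          have : (k % q : ℕ) ≤ q - 1 := by omega
          have h2 : ((k % q : ℕ):ℝ) ≤ ((q - 1 : ℕ):ℝ) := by exact_mod_cast this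
          have h3 : ((q - 1 : ℕ):ℝ) = (q:ℝ) - 1 := by
            have : (1:ℕ) ≤ q := hq1
            push_cast [this]
            ring
          linarith
        constructor <;> nlinarith [Nat.cast_nonneg (α := ℝ) (k % q)]
      exact mul_le_mul_of_nonneg_right h1 pi_pos.le
    calc ‖(a:AC)‖ = |a| := normA (habs.trans hδπ)
      _ ≤ δ := habs

set_option maxHeartbeats 1000000 in
open GromovHausdorff Metric in
lemma lb (n m : ℕ) (hn : 2 ≤ n) (hnm : n ≤ m) (hdvd : n ∣ m) :
    haveI : NeZero n := ⟨Nat.ne_of_gt (by omega)⟩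
    haveI : NeZero m := ⟨Nat.ne_of_gt (by omega)⟩
    π / n - π / m ≤ GromovHausdorff.ghDist (Pvert n) (Pvert m) := by
  haveI : NeZero n := ⟨by omega⟩
  haveI : NeZero m := ⟨by omega⟩
  have hn0 : 0 < n := by omega
  have hm0 : 0 < m := by omega
  have hm2 : 2 ≤ m := le_trans hn hnm
  have hnR : (0:ℝ) < n := by exact_mod_cast hn0
  have hmR : (0:ℝ) < m := by exact_mod_cast hm0
  by_contra hcon
  push_neg at hcon
  set D := GromovHausdorff.ghDist (↥(Pvert n)) (↥(Pvert m)) with hD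
  set X := ↥(Pvert n)
  set Y := ↥(Pvert m)
  set Φ₀ : X → OptimalGHCoupling X Y := optimalGHInjl X Y with hΦ₀
  set Ψ₀ : Y → OptimalGHCoupling X Y := optimalGHInjr X Y with hΨ₀
  have hΦi : Isometry Φ₀ := isometry_optimalGHInjl X Y
  have hΨi : Isometry Ψ₀ := isometry_optimalGHInjr X Y
  have hAfin : (Set.range Φ₀).Finite := Set.finite_range _
  have hBfin : (Set.range Ψ₀).Finite := Set.finite_range _
  have hopt : hausdorffDist (Set.range Φ₀) (Set.range Ψ₀) = D := hausdorffDist_optimal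
  have hedist : EMetric.hausdorffEdist (Set.range Φ₀) (Set.range Ψ₀) ≠ ⊤ :=
    hausdorffEdist_ne_top_of_nonempty_of_bounded (Set.range_nonempty _) (Set.range_nonempty _)
      hAfin.isBounded hBfin.isBounded
  -- choose, for each y, a closest x
  have key : ∀ y : Y, ∃ x : X, dist (Ψ₀ y) (Φ₀ x) ≤ D := by
    intro y
    have h1 : infDist (Ψ₀ y) (Set.range Φ₀) ≤ D := by
      rw [← hopt, hausdorffDist_comm]
      exact infDist_le_hausdorffDist_of_mem (Set.mem_range_self y)
        (by rw [hausdorffEDist_comm]; exact hedist)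
    obtain ⟨z, ⟨x, rfl⟩, hz⟩ := hAfin.isCompact.exists_infDist_eq_dist
      (Set.range_nonempty _) (Ψ₀ y)
    exact ⟨x, by rw [← hz]; exact h1⟩
  choose f hf using key
  -- f is locally constant along short steps, hence constant around the m-gon
  have hstep : ∀ y y' : Y, dist (y:AC) (y':AC) ≤ 2*π/m → f y = f y' := by
    intro y y' hyy'
    by_contra hne
    have h1 : 2*π/n ≤ dist ((f y : X) : AC) ((f y' : X) : AC) :=
      dist_vtx_ne hn0 (f y).2 (f y').2 (fun h => hne (Subtype.ext h))
    have h2 : dist ((f y : X) : AC) ((f y' : X) : AC) = dist (Φ₀ (f y)) (Φ₀ (f y')) := by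
      rw [hΦi.dist_eq, Subtype.dist_eq]
    have h3 : dist (Φ₀ (f y)) (Φ₀ (f y')) ≤ D + (2*π/m) + D := by
      have t1 := hf y
      have t2 := hf y'
      have t3 : dist (Ψ₀ y) (Ψ₀ y') = dist (y:AC) (y':AC) := by
        rw [hΨi.dist_eq, Subtype.dist_eq]
      calc dist (Φ₀ (f y)) (Φ₀ (f y'))
          ≤ dist (Φ₀ (f y)) (Ψ₀ y) + dist (Ψ₀ y) (Ψ₀ y') + dist (Ψ₀ y') (Φ₀ (f y')) :=
            dist_triangle4 _ _ _ _
        _ ≤ D + (2*π/m) + D := by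
            rw [dist_comm (Φ₀ (f y))]
            rw [t3]
            exact add_le_add (add_le_add t1 hyy') t2
    have hc : 2*π/n < 2*π/n := by
      calc 2*π/n ≤ dist (Φ₀ (f y)) (Φ₀ (f y')) := h2 ▸ h1
        _ ≤ D + (2*π/m) + D := h3
        _ < (π/n - π/m) + (2*π/m) + (π/n - π/m) := by linarith
        _ = 2*π/n := by ring
    exact absurd hc (lt_irrefl _)
  -- the cycle of vertices of the m-gon
  have vmmem : ∀ k : ℕ, vtx m (k % m) ∈ Pvert m := fun k => vtx_mem (Nat.mod_lt _ hm0)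
  set vm : ℕ → Y := fun k => ⟨vtx m (k % m), vmmem k⟩ with hvm
  have hconst : ∀ k : ℕ, f (vm k) = f (vm 0) := by
    intro k
    induction k with
    | zero => rfl
    | succ k ih =>
      rw [← ih]
      apply hstep
      show dist (vtx m ((k+1) % m)) (vtx m (k % m)) ≤ 2*π/m
      rw [← vtx_mod m hm0, ← vtx_mod m hm0, dist_comm, dist_vtx_adj hm2]
  -- derive the contradiction
  set x₀ : X := f (vm 0) with hx₀
  have hfy : ∀ y : Y, f y = x₀ := by
    intro y
    obtain ⟨k, hk, hyk⟩ := mem_Pvert y.2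
    have : y = vm k := by
      apply Subtype.ext
      show (y:AC) = vtx m (k % m)
      rw [hyk, Nat.mod_eq_of_lt hk]
    rw [this]
    exact hconst k
  -- a vertex of the n-gon different from x₀
  have hd01 : dist (vtx n 0) (vtx n 1) = 2*π/n := by
    have := dist_vtx_adj hn 0
    simpa using this
  have hne01 : vtx n 0 ≠ vtx n 1 := by
    intro h
    rw [h, dist_self] at hd01
    have : (0:ℝ) < 2*π/n := by positivity
    linarith
  set a0 : X := ⟨vtx n 0, vtx_mem hn0⟩ with ha0
  set a1 : X := ⟨vtx n 1, vtx_mem (by omega)⟩ with ha1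
  have hne' : a0 ≠ a1 := fun h => hne01 (congrArg Subtype.val h)
  obtain ⟨x₁, hx₁⟩ : ∃ x₁ : X, x₁ ≠ x₀ := by
    by_cases h : a0 = x₀
    · exact ⟨a1, fun hc => hne' (h.trans hc.symm)⟩
    · exact ⟨a0, h⟩
  -- x₁ has a partner y₁
  obtain ⟨y₁, hy₁⟩ : ∃ y₁ : Y, dist (Φ₀ x₁) (Ψ₀ y₁) ≤ D := by
    have h1 : infDist (Φ₀ x₁) (Set.range Ψ₀) ≤ D := by
      rw [← hopt]
      exact infDist_le_hausdorffDist_of_mem (Set.mem_range_self x₁) hedist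
    obtain ⟨z, ⟨y, rfl⟩, hz⟩ := hBfin.isCompact.exists_infDist_eq_dist
      (Set.range_nonempty _) (Φ₀ x₁)
    exact ⟨y, by rw [← hz]; exact h1⟩
  have h2 : dist (Φ₀ x₀) (Ψ₀ y₁) ≤ D := by
    have := hf y₁
    rw [hfy y₁] at this
    rw [dist_comm]
    exact this
  have h3 : 2*π/n ≤ dist ((x₀ : X) : AC) ((x₁ : X) : AC) :=
    dist_vtx_ne hn0 x₀.2 x₁.2 (fun h => hx₁ (Subtype.ext h).symm)
  have h4 : dist ((x₀ : X) : AC) ((x₁ : X) : AC) ≤ 2*D := by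
    have : dist ((x₀ : X) : AC) ((x₁ : X) : AC) = dist (Φ₀ x₀) (Φ₀ x₁) := by
      rw [hΦi.dist_eq, Subtype.dist_eq]
    rw [this]
    calc dist (Φ₀ x₀) (Φ₀ x₁) ≤ dist (Φ₀ x₀) (Ψ₀ y₁) + dist (Ψ₀ y₁) (Φ₀ x₁) := dist_triangle _ _ _
      _ ≤ D + D := add_le_add h2 (by rw [dist_comm]; exact hy₁)
      _ = 2*D := by ring
  have : 2*π/n < 2*π/n := by
    calc 2*π/n ≤ 2*D := le_trans h3 h4
      _ < 2*(π/n - π/m) := by linarith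
      _ = 2*π/n - 2*π/m := by ring
      _ < 2*π/n := by
        have : (0:ℝ) < 2*π/m := by positivity
        linarith
  exact absurd this (lt_irrefl _)

theorem stmt4 (n m : ℕ) (hn : 2 ≤ n) (hnm : n ≤ m) (hdvd : n ∣ m) :
    haveI : NeZero n := ⟨by omega⟩
    haveI : NeZero m := ⟨by omega⟩
    GromovHausdorff.ghDist (Pvert n) (Pvert m) = π / n - π / m := by
  haveI : NeZero n := ⟨by omega⟩
  haveI : NeZero m := ⟨by omega⟩
  exact le_antisymm (ub n m hn hnm hdvd) (lb n m hn hnm hdvd)
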